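/- If a graph H admits a proper k-coloring, then the square HH of any partial labeling of H also admits a proper k-coloring. Equivalently: if G is a square with butterfly involution φ, then the chromatic number of the subgraph of G induced on F_φ ∪ A₀ equals the chromatic number of G. -/

import Mathlib

open SimpleGraph

/-- Butterfly involution data: `φ` is an involutive automorphism of `G`, with nonempty
fixed set and nonempty non-fixed set, the common-neighbor condition, and a partition
`A0 ∪ A1` of the non-fixed vertices with no crossing edges, swapped by `φ`. -/
def ButterflyData {V : Type*} (G : SimpleGraph V) (phi : G ≃g G) (A0 A1 : Set V) : Prop :=
  Function.Involutive phi ∧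
  (∃ v, phi v = v) ∧ (∃ v, phi v ≠ v) ∧
  (∀ u : V, phi u ≠ u →
    G.neighborSet u ∩ G.neighborSet (phi u) = G.neighborSet u ∩ {v | phi v = v}) ∧
  A0 ∪ A1 = {v | phi v ≠ v} ∧ Disjoint A0 A1 ∧
  (∀ a ∈ A0, ∀ b ∈ A1, ¬ G.Adj a b) ∧
  (∀ a ∈ A0, phi a ∈ A1) ∧ (∀ a ∈ A1, phi a ∈ A0)

/-- A graph is a square (in the gluing algebra) iff it admits a butterfly involution. -/
def IsSquareGraph {V : Type*} (G : SimpleGraph V) : Prop :=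
  ∃ (phi : G ≃g G) (A0 A1 : Set V), ButterflyData G phi A0 A1

theorem stmt3 {V : Type*} [Fintype V] (G : SimpleGraph V) (phi : G ≃g G)
    (A0 A1 : Set V) (h : ButterflyData G phi A0 A1) :
    (G.induce ({v | phi v = v} ∪ A0)).chromaticNumber = G.chromaticNumber := by
  classical
  obtain ⟨hinv, -, -, -, hpart, hdisj, hcross, hA0, hA1⟩ := h
  set S : Set V := {v | phi v = v} ∪ A0 with hS
  apply le_antisymm
  · exact SimpleGraph.chromaticNumber_le_of_forall_imp (fun n hn =>
      SimpleGraph.Colorable.of_hom (SimpleGraph.Embedding.induce S).toHom hn)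
  · apply SimpleGraph.chromaticNumber_le_of_forall_imp
    intro n hn
    obtain ⟨C⟩ := hn
    have hmem : ∀ v : V, v ∉ S → phi v ∈ S ∧ v ∈ A1 := by
      intro v hv
      have h1 : phi v ≠ v := fun he => hv (Or.inl he)
      have h2 : v ∈ A0 ∪ A1 := by rw [hpart]; exact h1
      have h3 : v ∈ A1 := h2.resolve_left (fun ha => hv (Or.inr ha))
      exact ⟨Or.inr (hA1 v h3), h3⟩
    refine ⟨⟨fun v => if hv : v ∈ S then C ⟨v, hv⟩ else C ⟨phi v, (hmem v hv).1⟩, ?_⟩⟩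
    intro a b hab
    by_cases ha : a ∈ S <;> by_cases hb : b ∈ S <;> simp only [dif_pos, dif_neg, ha, hb]
    · exact C.valid (by exact hab : (G.induce S).Adj ⟨a, ha⟩ ⟨b, hb⟩)
    · obtain ⟨hpb, hb1⟩ := hmem b hb
      have hafix : phi a = a := by
        rcases ha with hfa | ha0
        · exact hfa
        · exact absurd hab (hcross a ha0 b hb1)
      have : G.Adj (phi a) (phi b) := phi.map_rel_iff.mpr hab
      rw [hafix] at this
      exact C.valid (by exact this : (G.induce S).Adj ⟨a, ha⟩ ⟨phi b, hpb⟩)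
    · obtain ⟨hpa, ha1⟩ := hmem a ha
      have hbfix : phi b = b := by
        rcases hb with hfb | hb0
        · exact hfb
        · exact absurd hab.symm (hcross b hb0 a ha1)
      have : G.Adj (phi a) (phi b) := phi.map_rel_iff.mpr hab
      rw [hbfix] at this
      exact C.valid (by exact this : (G.induce S).Adj ⟨phi a, hpa⟩ ⟨b, hb⟩)
    · obtain ⟨hpa, ha1⟩ := hmem a ha
      obtain ⟨hpb, hb1⟩ := hmem b hb
      have : G.Adj (phi a) (phi b) := phi.map_rel_iff.mpr hab
      exact C.valid (by exact this : (G.induce S).Adj ⟨phi a, hpa⟩ ⟨phi b, hpb⟩)
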